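/- Wheel condition closure under shuffle product: let Sh_k be the space of symmetric rational functions G(x_1,…,x_k) = g(x_1,…,x_k)/Π_{i<j}(x_i − x_j)² with g a symmetric Laurent polynomial satisfying g = 0 whenever (x_1, x_2, x_3) = (x, q1 x, q1 q2 x) or (x, q2 x, q1 q2 x) (for k ≥ 3; no condition for k ≤ 2). Then for G1 ∈ Sh_k and G2 ∈ Sh_l, the shuffle product (G1 * G2)(x_1,…,x_{k+l}) = Sym[G1(x_1,…,x_k) G2(x_{k+1},…,x_{k+l}) Π_{i≤k < j} Π_{s=1}^3 (x_j − q_s x_i)/(x_j − x_i)] again lies in Sh_{k+l}; in particular it has the form (symmetric Laurent polynomial)/Π_{i<j}(x_i − x_j)² and satisfies the wheel condition. -/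

import Mathlib

open MvPolynomial

/-- Value of the Laurent polynomial `P / (x_1 ⋯ x_n)^m` at a point. -/
noncomputable def lval {n : ℕ} (P : MvPolynomial (Fin n) ℂ) (m : ℕ) (x : Fin n → ℂ) : ℂ :=
  MvPolynomial.eval x P / (∏ i, x i) ^ m

/-- Vandermonde product `Π_{i<j} (x_i - x_j)`. -/
noncomputable def vand {n : ℕ} (x : Fin n → ℂ) : ℂ :=
  ∏ i : Fin n, ∏ j : Fin n, if i < j then (x i - x j) else 1

/-- Symmetry of a function of `n` variables. -/
def IsSymmFn {n : ℕ} (f : (Fin n → ℂ) → ℂ) : Prop :=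
  ∀ σ : Equiv.Perm (Fin n), ∀ x : Fin n → ℂ, f (x ∘ σ) = f x

/-- The wheel condition: the function vanishes whenever three (distinct positions of the)
variables are in ratio `(x, q1 x, q1 q2 x)` or `(x, q2 x, q1 q2 x)`. -/
def WheelFn {n : ℕ} (q1 q2 : ℂ) (f : (Fin n → ℂ) → ℂ) : Prop :=
  ∀ x : Fin n → ℂ, (∀ i, x i ≠ 0) →
    (∃ i j k : Fin n, i ≠ j ∧ j ≠ k ∧ i ≠ k ∧
      ((x j = q1 * x i ∧ x k = q1 * q2 * x i) ∨
       (x j = q2 * x i ∧ x k = q1 * q2 * x i))) →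
    f x = 0

open Finset
-- vand nonzero for injective x
lemma vand_ne_zero {n : ℕ} {x : Fin n → ℂ} (hx : Function.Injective x) : vand x ≠ 0 := by
  unfold vand
  rw [Finset.prod_ne_zero_iff]
  intro i _
  rw [Finset.prod_ne_zero_iff]
  intro j _
  split
  · exact sub_ne_zero.mpr (fun h => absurd (hx h) (ne_of_lt ‹i < j›))
  · exact one_ne_zero

-- W function
noncomputable def Wfun {n : ℕ} (x : Fin n → ℂ) : ℂ :=
  ∏ p : Fin n × Fin n, if p.1 ≠ p.2 then (x p.1 - x p.2) else 1

lemma Wfun_comp {n : ℕ} (x : Fin n → ℂ) (σ : Equiv.Perm (Fin n)) :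
    Wfun (x ∘ σ) = Wfun x := by
  unfold Wfun
  refine Fintype.prod_equiv (Equiv.prodCongr σ σ) _ _ (fun p => ?_)
  simp only [Equiv.prodCongr_apply, Prod.map, Function.comp_apply]
  congr 1
  simp [σ.injective.ne_iff]

lemma vand_sq_eq_W {n : ℕ} (x : Fin n → ℂ) :
    vand x ^ 2 = (-1) ^ ((Finset.univ : Finset (Fin n × Fin n)).filter
      (fun p => p.1 < p.2)).card * Wfun x := by
  have h1 : vand x = ∏ p ∈ (Finset.univ : Finset (Fin n × Fin n)).filter
      (fun p => p.1 < p.2), (x p.1 - x p.2) := by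
    rw [Finset.prod_filter, ← Finset.univ_product_univ, Finset.prod_product]
    rfl
  have h2 : Wfun x = (∏ p ∈ (Finset.univ : Finset (Fin n × Fin n)).filter
      (fun p => p.1 < p.2), (x p.1 - x p.2)) *
      ∏ p ∈ (Finset.univ : Finset (Fin n × Fin n)).filter
      (fun p => p.2 < p.1), (x p.1 - x p.2) := by
    unfold Wfun
    rw [← Finset.prod_filter]
    rw [← Finset.prod_union]
    · apply Finset.prod_congr _ (fun _ _ => rfl)
      ext p
      simp only [Finset.mem_filter, Finset.mem_union, Finset.mem_univ, true_and]
      constructor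
      · intro h; rcases lt_or_gt_of_ne h with h | h
        · exact Or.inl h
        · exact Or.inr h
      · rintro (h | h)
        · exact ne_of_lt h
        · exact (ne_of_lt h).symm
    · rw [Finset.disjoint_filter]
      intro p _ h1 h2
      exact absurd (h1.trans h2) (lt_irrefl _)
  have h3 : ∏ p ∈ (Finset.univ : Finset (Fin n × Fin n)).filter
      (fun p => p.2 < p.1), (x p.1 - x p.2)
      = ∏ p ∈ (Finset.univ : Finset (Fin n × Fin n)).filter
      (fun p => p.1 < p.2), (x p.2 - x p.1) := by
    refine Finset.prod_nbij' (fun p => (p.2, p.1)) (fun p => (p.2, p.1)) ?_ ?_ ?_ ?_ ?_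
    · intro a ha; simp_all
    · intro a ha; simp_all
    · intro a _; rfl
    · intro a _; rfl
    · intro a _; rfl
  have h4 : ∏ p ∈ (Finset.univ : Finset (Fin n × Fin n)).filter
      (fun p => p.1 < p.2), (x p.2 - x p.1)
      = (-1) ^ ((Finset.univ : Finset (Fin n × Fin n)).filter
      (fun p => p.1 < p.2)).card * ∏ p ∈ (Finset.univ : Finset (Fin n × Fin n)).filter
      (fun p => p.1 < p.2), (x p.1 - x p.2) := by
    rw [← Finset.prod_const, ← Finset.prod_mul_distrib]
    apply Finset.prod_congr rfl
    intro p _; ring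
  set c := ((Finset.univ : Finset (Fin n × Fin n)).filter (fun p => p.1 < p.2)).card with hcdef
  set A := ∏ p ∈ (Finset.univ : Finset (Fin n × Fin n)).filter (fun p => p.1 < p.2), (x p.1 - x p.2) with hA
  have hc : ((-1:ℂ)) ^ c * ((-1:ℂ)) ^ c = 1 := by
    rw [← pow_add, Even.neg_one_pow ⟨c, rfl⟩]
  rw [h1, h2, h3, h4]
  linear_combination (-(A^2)) * hc

lemma vand_sq_comp {n : ℕ} (x : Fin n → ℂ) (σ : Equiv.Perm (Fin n)) :
    vand (x ∘ σ) ^ 2 = vand x ^ 2 := by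
  rw [vand_sq_eq_W, vand_sq_eq_W, Wfun_comp]

lemma natAdd_ne_castAdd {k l : ℕ} (j : Fin l) (i : Fin k) :
    Fin.natAdd k j ≠ Fin.castAdd l i := by
  intro h
  have := congrArg Fin.val h
  simp at this
  omega

lemma vand_split {k l : ℕ} (y : Fin (k + l) → ℂ) :
    vand y = vand (fun i : Fin k => y (Fin.castAdd l i)) *
      vand (fun j : Fin l => y (Fin.natAdd k j)) *
      ∏ i : Fin k, ∏ j : Fin l, (y (Fin.castAdd l i) - y (Fin.natAdd k j)) := by
  have hAA : ∀ (i j : Fin k), (Fin.castAdd l i < Fin.castAdd l j) ↔ i < j := by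
    intro i j
    rw [Fin.lt_def, Fin.lt_def, Fin.coe_castAdd, Fin.coe_castAdd]
  have hBB : ∀ (i j : Fin l), (Fin.natAdd k i < Fin.natAdd k j) ↔ i < j := by
    intro i j
    rw [Fin.lt_def, Fin.lt_def, Fin.coe_natAdd, Fin.coe_natAdd]
    omega
  have hAB : ∀ (i : Fin k) (j : Fin l), Fin.castAdd l i < Fin.natAdd k j := by
    intro i j
    simp only [Fin.lt_def, Fin.coe_castAdd, Fin.coe_natAdd]
    have := i.isLt; omega
  have hBA : ∀ (i : Fin l) (j : Fin k), ¬ (Fin.natAdd k i < Fin.castAdd l j) := by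
    intro i j
    simp only [Fin.lt_def, Fin.coe_castAdd, Fin.coe_natAdd]
    have := j.isLt; omega
  unfold vand
  rw [Fin.prod_univ_add]
  have hA : ∀ i : Fin k, (∏ j : Fin (k+l), (if Fin.castAdd l i < j
        then y (Fin.castAdd l i) - y j else 1))
      = (∏ j : Fin k, (if i < j then y (Fin.castAdd l i) - y (Fin.castAdd l j) else 1)) *
        ∏ j : Fin l, (y (Fin.castAdd l i) - y (Fin.natAdd k j)) := by
    intro i
    rw [Fin.prod_univ_add]
    have e1 : (∏ j : Fin k, (if Fin.castAdd l i < Fin.castAdd l j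
          then y (Fin.castAdd l i) - y (Fin.castAdd l j) else 1))
        = ∏ j : Fin k, (if i < j then y (Fin.castAdd l i) - y (Fin.castAdd l j) else 1) :=
      Finset.prod_congr rfl (fun j _ => by
        by_cases hij : i < j
        · rw [if_pos ((hAA i j).mpr hij), if_pos hij]
        · rw [if_neg (fun c => hij ((hAA i j).mp c)), if_neg hij])
    have e2 : (∏ j : Fin l, (if Fin.castAdd l i < Fin.natAdd k j
          then y (Fin.castAdd l i) - y (Fin.natAdd k j) else 1))
        = ∏ j : Fin l, (y (Fin.castAdd l i) - y (Fin.natAdd k j)) :=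
      Finset.prod_congr rfl (fun j _ => if_pos (hAB i j))
    rw [e1, e2]
  have hB : ∀ i : Fin l, (∏ j : Fin (k+l), (if Fin.natAdd k i < j
        then y (Fin.natAdd k i) - y j else 1))
      = ∏ j : Fin l, (if i < j then y (Fin.natAdd k i) - y (Fin.natAdd k j) else 1) := by
    intro i
    rw [Fin.prod_univ_add]
    rw [Finset.prod_congr rfl (fun j _ => if_neg (hBA i j)), Finset.prod_const_one, one_mul]
    exact Finset.prod_congr rfl (fun j _ => by
      by_cases hij : i < j
      · rw [if_pos ((hBB i j).mpr hij), if_pos hij]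
      · rw [if_neg (fun c => hij ((hBB i j).mp c)), if_neg hij])
  rw [Finset.prod_congr rfl (fun i _ => hA i), Finset.prod_congr rfl (fun i _ => hB i),
    Finset.prod_mul_distrib]
  ring

noncomputable def shufQ (q1 q2 q3 : ℂ) {k l : ℕ} (P1 : MvPolynomial (Fin k) ℂ) (m1 : ℕ)
    (P2 : MvPolynomial (Fin l) ℂ) (m2 : ℕ) (σ : Equiv.Perm (Fin (k + l))) :
    MvPolynomial (Fin (k + l)) ℂ :=
  rename (σ ∘ Fin.castAdd l) P1 * rename (σ ∘ Fin.natAdd k) P2 *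
  (∏ j : Fin l, X (σ (Fin.natAdd k j))) ^ m1 *
  (∏ i : Fin k, X (σ (Fin.castAdd l i))) ^ m2 *
  ∏ i : Fin k, ∏ j : Fin l,
    ((X (σ (Fin.natAdd k j)) - C q1 * X (σ (Fin.castAdd l i))) *
     (X (σ (Fin.natAdd k j)) - C q2 * X (σ (Fin.castAdd l i))) *
     (X (σ (Fin.natAdd k j)) - C q3 * X (σ (Fin.castAdd l i))) *
     (X (σ (Fin.natAdd k j)) - X (σ (Fin.castAdd l i))))

lemma eval_shufQ (q1 q2 q3 : ℂ) {k l : ℕ} (P1 : MvPolynomial (Fin k) ℂ) (m1 : ℕ)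
    (P2 : MvPolynomial (Fin l) ℂ) (m2 : ℕ) (σ : Equiv.Perm (Fin (k + l)))
    (x : Fin (k + l) → ℂ) :
    eval x (shufQ q1 q2 q3 P1 m1 P2 m2 σ) =
      eval (fun i => x (σ (Fin.castAdd l i))) P1 *
      eval (fun j => x (σ (Fin.natAdd k j))) P2 *
      (∏ j : Fin l, x (σ (Fin.natAdd k j))) ^ m1 *
      (∏ i : Fin k, x (σ (Fin.castAdd l i))) ^ m2 *
      ∏ i : Fin k, ∏ j : Fin l,
        ((x (σ (Fin.natAdd k j)) - q1 * x (σ (Fin.castAdd l i))) *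
         (x (σ (Fin.natAdd k j)) - q2 * x (σ (Fin.castAdd l i))) *
         (x (σ (Fin.natAdd k j)) - q3 * x (σ (Fin.castAdd l i))) *
         (x (σ (Fin.natAdd k j)) - x (σ (Fin.castAdd l i)))) := by
  simp only [shufQ, map_mul, map_pow, map_prod, map_sub, eval_X, eval_C, eval_rename]
  rfl

lemma prod_neg_fin {m : ℕ} (f : Fin m → ℂ) : ∏ j, (-(f j)) = (-1) ^ m * ∏ j, f j := by
  calc ∏ j, (-(f j)) = ∏ j, ((-1) * f j) := by
        exact Finset.prod_congr rfl fun j _ => by ring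
    _ = (∏ _j : Fin m, (-1 : ℂ)) * ∏ j, f j := Finset.prod_mul_distrib
    _ = (-1) ^ m * ∏ j, f j := by rw [Finset.prod_const, Finset.card_univ, Fintype.card_fin]

lemma term_eq (q1 q2 q3 : ℂ) {k l : ℕ} (P1 : MvPolynomial (Fin k) ℂ) (m1 : ℕ)
    (P2 : MvPolynomial (Fin l) ℂ) (m2 : ℕ)
    (x : Fin (k + l) → ℂ) (hx0 : ∀ i, x i ≠ 0) (hinj : Function.Injective x)
    (σ : Equiv.Perm (Fin (k + l))) :
    (lval P1 m1 (fun i => x (σ (Fin.castAdd l i))) /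
        vand (fun i => x (σ (Fin.castAdd l i))) ^ 2) *
    (lval P2 m2 (fun j => x (σ (Fin.natAdd k j))) /
        vand (fun j => x (σ (Fin.natAdd k j))) ^ 2) *
    (∏ i : Fin k, ∏ j : Fin l,
      ((x (σ (Fin.natAdd k j)) - q1 * x (σ (Fin.castAdd l i))) *
       (x (σ (Fin.natAdd k j)) - q2 * x (σ (Fin.castAdd l i))) *
       (x (σ (Fin.natAdd k j)) - q3 * x (σ (Fin.castAdd l i)))) /
      (x (σ (Fin.natAdd k j)) - x (σ (Fin.castAdd l i))))
    = eval x (shufQ q1 q2 q3 P1 m1 P2 m2 σ) /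
        ((∏ p, x p) ^ (m1 + m2) * vand x ^ 2) := by
  set a : Fin k → ℂ := fun i => x (σ (Fin.castAdd l i)) with ha
  set b : Fin l → ℂ := fun j => x (σ (Fin.natAdd k j)) with hb
  have hainj : Function.Injective a := by
    intro i i' h
    have := hinj h
    have := σ.injective this
    exact Fin.castAdd_injective _ _ this
  have hbinj : Function.Injective b := by
    intro i i' h
    have := hinj h
    have := σ.injective this
    have := congrArg Fin.val this
    simp only [Fin.coe_natAdd] at this
    exact Fin.ext (by omega)
  have hvA : vand a ≠ 0 := vand_ne_zero hainj
  have hvB : vand b ≠ 0 := vand_ne_zero hbinj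
  have hpA : (∏ i, a i) ≠ 0 := Finset.prod_ne_zero_iff.mpr fun i _ => hx0 _
  have hpB : (∏ j, b j) ≠ 0 := Finset.prod_ne_zero_iff.mpr fun j _ => hx0 _
  have hd : ∀ (i : Fin k) (j : Fin l), b j - a i ≠ 0 := by
    intro i j
    refine sub_ne_zero.mpr (fun h => ?_)
    exact natAdd_ne_castAdd j i (σ.injective (hinj h))
  have hE : (∏ i : Fin k, ∏ j : Fin l, (b j - a i)) ≠ 0 :=
    Finset.prod_ne_zero_iff.mpr fun i _ => Finset.prod_ne_zero_iff.mpr fun j _ => hd i j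
  -- denominator factorization
  have h4 : ((-1 : ℂ) ^ (k * l)) ^ 2 = 1 := by
    rw [← pow_mul, mul_comm (k*l) 2, pow_mul, neg_one_sq, one_pow]
  have hvand : vand x ^ 2 = vand a ^ 2 * vand b ^ 2 *
      (∏ i : Fin k, ∏ j : Fin l, (b j - a i)) ^ 2 := by
    have hs := vand_split (x ∘ σ)
    simp only [Function.comp_apply] at hs
    have h1 : (∏ i : Fin k, ∏ j : Fin l, (a i - b j))
        = (-1) ^ (k * l) * ∏ i : Fin k, ∏ j : Fin l, (b j - a i) := by
      calc (∏ i : Fin k, ∏ j : Fin l, (a i - b j))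
          = ∏ i : Fin k, ((-1 : ℂ) ^ l * ∏ j : Fin l, (b j - a i)) := by
            refine Finset.prod_congr rfl fun i _ => ?_
            rw [← prod_neg_fin]
            exact Finset.prod_congr rfl fun j _ => by ring
        _ = (∏ _i : Fin k, (-1 : ℂ) ^ l) * ∏ i : Fin k, ∏ j : Fin l, (b j - a i) :=
            Finset.prod_mul_distrib
        _ = (-1) ^ (k * l) * ∏ i : Fin k, ∏ j : Fin l, (b j - a i) := by
            rw [Finset.prod_const, Finset.card_univ, Fintype.card_fin, ← pow_mul, mul_comm l k]
    rw [← vand_sq_comp x σ, hs, h1, mul_pow, mul_pow, mul_pow, h4, one_mul]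
  have hx : (∏ p, x p) = (∏ i, a i) * (∏ j, b j) := by
    calc (∏ p, x p) = ∏ p, x (σ p) := (Equiv.prod_comp σ x).symm
      _ = _ := Fin.prod_univ_add (fun p => x (σ p))
  have hqsplit : (∏ i : Fin k, ∏ j : Fin l,
      ((b j - q1 * a i) * (b j - q2 * a i) * (b j - q3 * a i)) / (b j - a i))
      = (∏ i : Fin k, ∏ j : Fin l, ((b j - q1 * a i) * (b j - q2 * a i) * (b j - q3 * a i))) /
        (∏ i : Fin k, ∏ j : Fin l, (b j - a i)) := by
    calc (∏ i : Fin k, ∏ j : Fin l,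
          ((b j - q1 * a i) * (b j - q2 * a i) * (b j - q3 * a i)) / (b j - a i))
        = ∏ i : Fin k, ((∏ j : Fin l, ((b j - q1 * a i) * (b j - q2 * a i) * (b j - q3 * a i))) /
            ∏ j : Fin l, (b j - a i)) :=
          Finset.prod_congr rfl fun i _ => Finset.prod_div_distrib _ _
      _ = _ := Finset.prod_div_distrib _ _
  have hnsplit : (∏ i : Fin k, ∏ j : Fin l,
      ((b j - q1 * a i) * (b j - q2 * a i) * (b j - q3 * a i) * (b j - a i)))
      = (∏ i : Fin k, ∏ j : Fin l, ((b j - q1 * a i) * (b j - q2 * a i) * (b j - q3 * a i))) *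
        (∏ i : Fin k, ∏ j : Fin l, (b j - a i)) := by
    calc (∏ i : Fin k, ∏ j : Fin l,
          ((b j - q1 * a i) * (b j - q2 * a i) * (b j - q3 * a i) * (b j - a i)))
        = ∏ i : Fin k, ((∏ j : Fin l, ((b j - q1 * a i) * (b j - q2 * a i) * (b j - q3 * a i))) *
            ∏ j : Fin l, (b j - a i)) :=
          Finset.prod_congr rfl fun i _ => Finset.prod_mul_distrib
      _ = _ := Finset.prod_mul_distrib
  rw [eval_shufQ, ← ha, ← hb, hnsplit, hqsplit, hvand, hx]
  rw [show lval P1 m1 a = eval a P1 / (∏ i, a i) ^ m1 from rfl,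
    show lval P2 m2 b = eval b P2 / (∏ j, b j) ^ m2 from rfl]
  set N := ∏ i : Fin k, ∏ j : Fin l, ((b j - q1 * a i) * (b j - q2 * a i) * (b j - q3 * a i))
  set E := ∏ i : Fin k, ∏ j : Fin l, (b j - a i)
  rw [div_div, div_div, div_mul_div_comm, div_mul_div_comm,
    div_eq_div_iff
      (mul_ne_zero (mul_ne_zero (mul_ne_zero (pow_ne_zero _ hpA) (pow_ne_zero _ hvA))
        (mul_ne_zero (pow_ne_zero _ hpB) (pow_ne_zero _ hvB))) hE)
      (mul_ne_zero (pow_ne_zero _ (mul_ne_zero hpA hpB))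
        (mul_ne_zero (mul_ne_zero (pow_ne_zero _ hvA) (pow_ne_zero _ hvB)) (pow_ne_zero _ hE)))]
  ring

lemma fin_add_cases' {k l : ℕ} (p : Fin (k + l)) :
    (∃ a : Fin k, p = Fin.castAdd l a) ∨ ∃ b : Fin l, p = Fin.natAdd k b := by
  rcases lt_or_ge (p : ℕ) k with h | h
  · exact Or.inl ⟨⟨p, h⟩, Fin.ext rfl⟩
  · refine Or.inr ⟨⟨(p : ℕ) - k, ?_⟩, Fin.ext ?_⟩
    · have := p.isLt; omega
    · simp only [Fin.coe_natAdd]; omega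

lemma shufQ_eval_zero_cross (q1 q2 q3 : ℂ) {k l : ℕ}
    (P1 : MvPolynomial (Fin k) ℂ) (m1 : ℕ) (P2 : MvPolynomial (Fin l) ℂ) (m2 : ℕ)
    (σ : Equiv.Perm (Fin (k + l))) (x : Fin (k + l) → ℂ)
    (r : ℂ) (hr : r = q1 ∨ r = q2 ∨ r = q3) (a : Fin k) (b : Fin l)
    (hrel : x (σ (Fin.natAdd k b)) = r * x (σ (Fin.castAdd l a))) :
    eval x (shufQ q1 q2 q3 P1 m1 P2 m2 σ) = 0 := by
  rw [eval_shufQ]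
  have hz : (∏ i : Fin k, ∏ j : Fin l,
      ((x (σ (Fin.natAdd k j)) - q1 * x (σ (Fin.castAdd l i))) *
       (x (σ (Fin.natAdd k j)) - q2 * x (σ (Fin.castAdd l i))) *
       (x (σ (Fin.natAdd k j)) - q3 * x (σ (Fin.castAdd l i))) *
       (x (σ (Fin.natAdd k j)) - x (σ (Fin.castAdd l i))))) = 0 := by
    refine Finset.prod_eq_zero (Finset.mem_univ a) ?_
    refine Finset.prod_eq_zero (Finset.mem_univ b) ?_
    rcases hr with h | h | h <;> subst h <;> rw [hrel] <;> ring
  rw [hz, mul_zero]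

lemma shufQ_eval_zero (q1 q2 q3 : ℂ) (h1 : q1 ≠ 0) (h2 : q2 ≠ 0)
    (hq : q1 * q2 * q3 = 1) {k l : ℕ}
    (P1 : MvPolynomial (Fin k) ℂ) (m1 : ℕ) (P2 : MvPolynomial (Fin l) ℂ) (m2 : ℕ)
    (hw1 : WheelFn q1 q2 (lval P1 m1)) (hw2 : WheelFn q1 q2 (lval P2 m2))
    (x : Fin (k + l) → ℂ) (hx0 : ∀ i, x i ≠ 0)
    (ii jj kk : Fin (k + l)) (hij : ii ≠ jj) (hjk : jj ≠ kk) (hik : ii ≠ kk)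
    (hrel : (x jj = q1 * x ii ∧ x kk = q1 * q2 * x ii) ∨
            (x jj = q2 * x ii ∧ x kk = q1 * q2 * x ii))
    (σ : Equiv.Perm (Fin (k + l))) :
    eval x (shufQ q1 q2 q3 P1 m1 P2 m2 σ) = 0 := by
  -- unified edge facts
  have he3 : x ii = q3 * x kk := by
    rcases hrel with ⟨e1, e2⟩ | ⟨e1, e2⟩ <;>
      · rw [e2]; linear_combination (-(x ii)) * hq
  have hedge1 : ∃ r, (r = q1 ∨ r = q2) ∧ x jj = r * x ii := by
    rcases hrel with ⟨e1, _⟩ | ⟨e1, _⟩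
    · exact ⟨q1, Or.inl rfl, e1⟩
    · exact ⟨q2, Or.inr rfl, e1⟩
  have hedge2 : ∃ r, (r = q1 ∨ r = q2) ∧ x kk = r * x jj := by
    rcases hrel with ⟨e1, e2⟩ | ⟨e1, e2⟩
    · exact ⟨q2, Or.inr rfl, by rw [e2, e1]; ring⟩
    · exact ⟨q1, Or.inl rfl, by rw [e2, e1]; ring⟩
  obtain ⟨r1, hr1, he1⟩ := hedge1
  obtain ⟨r2, hr2, he2⟩ := hedge2
  have hr1' : r1 = q1 ∨ r1 = q2 ∨ r1 = q3 := hr1.elim Or.inl (fun h => Or.inr (Or.inl h))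
  have hr2' : r2 = q1 ∨ r2 = q2 ∨ r2 = q3 := hr2.elim Or.inl (fun h => Or.inr (Or.inl h))
  have hq3' : q3 = q1 ∨ q3 = q2 ∨ q3 = q3 := Or.inr (Or.inr rfl)
  rcases fin_add_cases' (σ.symm ii) with ⟨au, hu⟩ | ⟨bu, hu⟩ <;>
    rcases fin_add_cases' (σ.symm jj) with ⟨av, hv⟩ | ⟨bv, hv⟩ <;>
    rcases fin_add_cases' (σ.symm kk) with ⟨aw, hw⟩ | ⟨bw, hw⟩
  -- AAA
  · have hu' : σ (Fin.castAdd l au) = ii := by rw [← hu, Equiv.apply_symm_apply]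
    have hv' : σ (Fin.castAdd l av) = jj := by rw [← hv, Equiv.apply_symm_apply]
    have hw' : σ (Fin.castAdd l aw) = kk := by rw [← hw, Equiv.apply_symm_apply]
    set y : Fin k → ℂ := fun i => x (σ (Fin.castAdd l i)) with hy
    have hz : lval P1 m1 y = 0 := by
      refine hw1 y (fun i => hx0 _) ⟨au, av, aw, ?_, ?_, ?_, ?_⟩
      · intro h; exact hij (by rw [← hu', ← hv', h])
      · intro h; exact hjk (by rw [← hv', ← hw', h])
      · intro h; exact hik (by rw [← hu', ← hw', h])
      · have e1 : y au = x ii := by rw [hy]; simp only; rw [hu']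
        have e2 : y av = x jj := by rw [hy]; simp only; rw [hv']
        have e3 : y aw = x kk := by rw [hy]; simp only; rw [hw']
        rw [e1, e2, e3]; exact hrel
    have hzz : eval y P1 = 0 := by
      have hp : ((∏ i, y i) ^ m1 : ℂ) ≠ 0 :=
        pow_ne_zero _ (Finset.prod_ne_zero_iff.mpr fun i _ => hx0 _)
      unfold lval at hz
      exact (div_eq_zero_iff.mp hz).resolve_right hp
    rw [eval_shufQ]
    rw [show eval (fun i => x (σ (Fin.castAdd l i))) P1 = 0 from hzz]
    ring
  -- AAB : edge jj -> kk
  · exact shufQ_eval_zero_cross q1 q2 q3 P1 m1 P2 m2 σ x r2 hr2' av bw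
      (by rw [← hw, Equiv.apply_symm_apply, ← hv, Equiv.apply_symm_apply]; exact he2)
  -- ABA : edge ii -> jj
  · exact shufQ_eval_zero_cross q1 q2 q3 P1 m1 P2 m2 σ x r1 hr1' au bv
      (by rw [← hv, Equiv.apply_symm_apply, ← hu, Equiv.apply_symm_apply]; exact he1)
  -- ABB : edge ii -> jj
  · exact shufQ_eval_zero_cross q1 q2 q3 P1 m1 P2 m2 σ x r1 hr1' au bv
      (by rw [← hv, Equiv.apply_symm_apply, ← hu, Equiv.apply_symm_apply]; exact he1)
  -- BAA : edge kk -> ii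
  · exact shufQ_eval_zero_cross q1 q2 q3 P1 m1 P2 m2 σ x q3 hq3' aw bu
      (by rw [← hu, Equiv.apply_symm_apply, ← hw, Equiv.apply_symm_apply]; exact he3)
  -- BAB : edge jj -> kk
  · exact shufQ_eval_zero_cross q1 q2 q3 P1 m1 P2 m2 σ x r2 hr2' av bw
      (by rw [← hw, Equiv.apply_symm_apply, ← hv, Equiv.apply_symm_apply]; exact he2)
  -- BBA : edge kk -> ii
  · exact shufQ_eval_zero_cross q1 q2 q3 P1 m1 P2 m2 σ x q3 hq3' aw bu
      (by rw [← hu, Equiv.apply_symm_apply, ← hw, Equiv.apply_symm_apply]; exact he3)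
  -- BBB
  · have hu' : σ (Fin.natAdd k bu) = ii := by rw [← hu, Equiv.apply_symm_apply]
    have hv' : σ (Fin.natAdd k bv) = jj := by rw [← hv, Equiv.apply_symm_apply]
    have hw' : σ (Fin.natAdd k bw) = kk := by rw [← hw, Equiv.apply_symm_apply]
    set y : Fin l → ℂ := fun j => x (σ (Fin.natAdd k j)) with hy
    have hz : lval P2 m2 y = 0 := by
      refine hw2 y (fun j => hx0 _) ⟨bu, bv, bw, ?_, ?_, ?_, ?_⟩
      · intro h; exact hij (by rw [← hu', ← hv', h])
      · intro h; exact hjk (by rw [← hv', ← hw', h])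
      · intro h; exact hik (by rw [← hu', ← hw', h])
      · have e1 : y bu = x ii := by rw [hy]; simp only; rw [hu']
        have e2 : y bv = x jj := by rw [hy]; simp only; rw [hv']
        have e3 : y bw = x kk := by rw [hy]; simp only; rw [hw']
        rw [e1, e2, e3]; exact hrel
    have hzz : eval y P2 = 0 := by
      have hp : ((∏ j, y j) ^ m2 : ℂ) ≠ 0 :=
        pow_ne_zero _ (Finset.prod_ne_zero_iff.mpr fun j _ => hx0 _)
      unfold lval at hz
      exact (div_eq_zero_iff.mp hz).resolve_right hp
    rw [eval_shufQ]
    rw [show eval (fun j => x (σ (Fin.natAdd k j))) P2 = 0 from hzz]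
    ring

/-- Wheel condition closure under the shuffle product: if `G1 = g1/Δ² ∈ Sh_k` and
`G2 = g2/Δ² ∈ Sh_l` (with `g1, g2` symmetric Laurent polynomials satisfying the wheel
condition), then the symmetrized shuffle product `G1 * G2` is again of the form
(symmetric Laurent polynomial satisfying the wheel condition) `/ Π_{i<j}(x_i-x_j)²`. -/
theorem statement16 (q1 q2 q3 : ℂ) (h1 : q1 ≠ 0) (h2 : q2 ≠ 0) (h3 : q3 ≠ 0)
    (hq : q1 * q2 * q3 = 1)
    (hgen : ∀ a b : ℤ, q1 ^ a * q2 ^ b = 1 → a = 0 ∧ b = 0)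
    (k l : ℕ)
    (P1 : MvPolynomial (Fin k) ℂ) (m1 : ℕ)
    (P2 : MvPolynomial (Fin l) ℂ) (m2 : ℕ)
    (hs1 : IsSymmFn (lval P1 m1)) (hs2 : IsSymmFn (lval P2 m2))
    (hw1 : WheelFn q1 q2 (lval P1 m1)) (hw2 : WheelFn q1 q2 (lval P2 m2)) :
    ∃ (P : MvPolynomial (Fin (k + l)) ℂ) (m : ℕ),
      IsSymmFn (lval P m) ∧ WheelFn q1 q2 (lval P m) ∧
      ∀ x : Fin (k + l) → ℂ, (∀ i, x i ≠ 0) → Function.Injective x →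
        (((k + l).factorial : ℂ))⁻¹ *
          ∑ σ : Equiv.Perm (Fin (k + l)),
            (lval P1 m1 (fun i => x (σ (Fin.castAdd l i))) /
                vand (fun i => x (σ (Fin.castAdd l i))) ^ 2) *
            (lval P2 m2 (fun j => x (σ (Fin.natAdd k j))) /
                vand (fun j => x (σ (Fin.natAdd k j))) ^ 2) *
            ∏ i : Fin k, ∏ j : Fin l,
              ((x (σ (Fin.natAdd k j)) - q1 * x (σ (Fin.castAdd l i))) *
               (x (σ (Fin.natAdd k j)) - q2 * x (σ (Fin.castAdd l i))) *
               (x (σ (Fin.natAdd k j)) - q3 * x (σ (Fin.castAdd l i)))) /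
              (x (σ (Fin.natAdd k j)) - x (σ (Fin.castAdd l i)))
        = lval P m x / vand x ^ 2 := by
  set c : ℂ := (((k + l).factorial : ℂ))⁻¹ with hc
  refine ⟨MvPolynomial.C c * ∑ σ : Equiv.Perm (Fin (k + l)), shufQ q1 q2 q3 P1 m1 P2 m2 σ,
    m1 + m2, ?_, ?_, ?_⟩
  case _ =>
    -- symmetry
    intro τ x
    unfold lval
    have hpr : (∏ i, (x ∘ τ) i) = ∏ i, x i := Equiv.prod_comp τ x
    rw [hpr]
    congr 1
    rw [map_mul, map_mul, eval_C, eval_C, map_sum, map_sum]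
    congr 1
    refine Fintype.sum_equiv (Equiv.mulLeft τ) _ _ (fun σ => ?_)
    rw [eval_shufQ, eval_shufQ]
    rfl
  case _ =>
    -- wheel
    rintro x hx0 ⟨ii, jj, kk, hij, hjk, hik, hrel⟩
    unfold lval
    rw [map_mul, eval_C, map_sum,
      Finset.sum_eq_zero (fun σ _ =>
        shufQ_eval_zero q1 q2 q3 h1 h2 hq P1 m1 P2 m2 hw1 hw2 x hx0 ii jj kk hij hjk hik hrel σ)]
    simp
  case _ =>
    intro x hx0 hinj
    rw [Finset.sum_congr rfl (fun σ _ => term_eq q1 q2 q3 P1 m1 P2 m2 x hx0 hinj σ)]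
    rw [← Finset.sum_div]
    unfold lval
    rw [map_mul, eval_C, map_sum, div_div, mul_div_assoc]
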